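/- Let A be a commutative ring, L a free abelian group of finite rank, J the augmentation ideal of the group ring A[L], and p a prime number. Then for every ℓ ∈ L and every integer r ≥ 0 one has δ_ℓ^{p^r} − 1 ∈ (pA[L] + J)^{r+1}, i.e. δ_{p^r ℓ} − 1 lies in the (r+1)-st power of the ideal generated by p and J. -/

import Mathlib

set_option maxHeartbeats 1000000
set_option synthInstance.maxHeartbeats 400000

open AddMonoidAlgebra

/-- The augmentation map of the group ring `A[L]`, sending each group element `δ_ℓ` to `1`. -/
noncomputable def aug (A : Type*) [CommRing A] (L : Type*) [AddCommGroup L] :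
    AddMonoidAlgebra A L →ₐ[A] A :=
  AddMonoidAlgebra.lift A A L 1

/-- The augmentation ideal `J ⊆ A[L]`. -/
noncomputable def augIdeal (A : Type*) [CommRing A] (L : Type*) [AddCommGroup L] :
    Ideal (AddMonoidAlgebra A L) :=
  RingHom.ker (aug A L)

private lemma key {R : Type*} [CommRing R] (I : Ideal R) (p n : ℕ) (hp : p.Prime)
    (hpI : (p : R) ∈ I) (x : R) (hx : x - 1 ∈ I ^ n) (hn : 1 ≤ n) :
    x ^ p - 1 ∈ I ^ (n + 1) := by
  have hxp : x ^ p = ∑ k ∈ Finset.range (p + 1), (x - 1) ^ k * (p.choose k : R) := by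
    conv_lhs => rw [show x = (x - 1) + 1 by ring]
    rw [add_pow]
    simp
  have : x ^ p - 1 = ∑ k ∈ Finset.range p, (x - 1) ^ (k + 1) * (p.choose (k + 1) : R) := by
    rw [hxp, Finset.sum_range_succ']
    simp
  rw [this]
  apply Ideal.sum_mem
  intro k hk
  have hk1 : (x - 1) ^ (k + 1) ∈ I ^ n := by
    rw [pow_succ]
    exact Ideal.mul_mem_left _ _ hx
  rcases eq_or_lt_of_le (Nat.succ_le_of_lt (Finset.mem_range.mp hk)) with h | h
  · -- k + 1 = p
    have h1 : (x - 1) ^ (k + 1) ∈ I ^ (n * (k + 1)) := by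
      rw [pow_mul]; exact Ideal.pow_mem_pow hx _
    have hle : n + 1 ≤ n * (k + 1) := by
      have h2 : 2 ≤ k + 1 := by have := hp.two_le; omega
      nlinarith
    exact Ideal.mul_mem_right _ _ (Ideal.pow_le_pow_right hle h1)
  · -- k + 1 < p : p ∣ choose
    obtain ⟨m, hm⟩ := hp.dvd_choose_self (Nat.succ_ne_zero k) h
    rw [hm]
    push_cast
    rw [show (x - 1) ^ (k + 1) * ((p : R) * m) = ((x - 1) ^ (k + 1) * m) * p by ring,
      pow_succ]
    exact Ideal.mul_mem_mul (Ideal.mul_mem_right _ _ hk1) hpI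

private lemma of'_smul_pow (A : Type*) [CommRing A] (L : Type*) [AddCommGroup L] (m : L) (n : ℕ) :
    AddMonoidAlgebra.of' A L (n • m) = (AddMonoidAlgebra.of' A L m) ^ n := by
  simp [AddMonoidAlgebra.of'_apply, AddMonoidAlgebra.single_pow]

/-- For a lattice `L`, a commutative ring `A` and a prime `p`, one has
`δ_{p^r ℓ} - 1 = δ_ℓ^{p^r} - 1 ∈ (p, J)^{r+1}` where `J` is the augmentation ideal of `A[L]`. -/
theorem statement14 (A : Type*) [CommRing A] (L : Type*) [AddCommGroup L]
    [Module.Free ℤ L] [Module.Finite ℤ L]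
    (p : ℕ) (hp : p.Prime) (ℓ : L) (r : ℕ) :
    AddMonoidAlgebra.of' A L ((p ^ r) • ℓ) - 1 ∈
      (Ideal.span {(p : AddMonoidAlgebra A L)} ⊔ augIdeal A L) ^ (r + 1) ∧
    (AddMonoidAlgebra.of' A L ℓ) ^ (p ^ r) - 1 ∈
      (Ideal.span {(p : AddMonoidAlgebra A L)} ⊔ augIdeal A L) ^ (r + 1) := by
  have hJ : ∀ m : L, AddMonoidAlgebra.of' A L m - 1 ∈ augIdeal A L := fun m => by
    simp [augIdeal, aug, RingHom.mem_ker, AddMonoidAlgebra.of'_apply]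
  set I : Ideal (AddMonoidAlgebra A L) :=
    Ideal.span {(p : AddMonoidAlgebra A L)} ⊔ augIdeal A L with hI
  have hpI : (p : AddMonoidAlgebra A L) ∈ I :=
    Ideal.mem_sup_left (Ideal.subset_span rfl)
  have main : (AddMonoidAlgebra.of' A L ℓ) ^ (p ^ r) - 1 ∈ I ^ (r + 1) := by
    induction r with
    | zero =>
      simpa using Ideal.mem_sup_right (hJ ℓ)
    | succ n ih =>
      have := key I p (n + 1) hp hpI _ ih (by omega)
      rw [← pow_mul, ← pow_succ] at this
      exact this
  exact ⟨by rwa [of'_smul_pow], main⟩
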